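/- arXiv:1705.04430 — 7 statements merged into one kernel-verified Lean document; each statement's English description precedes it below -/
import Mathlib

section
/- Let A ∈ ℝ^{n×n} have zero diagonal, L its signed Laplacian, and 𝓛_{|A|} the Laplacian of |A|. Then for all t ≥ 0, the entrywise absolute value of exp(-tL) is bounded by exp(-t𝓛_{|A|}): |exp(-tL)| ≤ exp(-t𝓛_{|A|}) entrywise, equivalently -exp(-t𝓛_{|A|}) ≤ exp(-tL) ≤ exp(-t𝓛_{|A|}) entrywise. -/
open Matrix Finset

/-- Entrywise positive part. -/
noncomputable def matPos {n : ℕ} (A : Matrix (Fin n) (Fin n) ℝ) : Matrix (Fin n) (Fin n) ℝ :=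
  fun i j => if 0 < A i j then A i j else 0

/-- Entrywise negative part. -/
noncomputable def matNeg {n : ℕ} (A : Matrix (Fin n) (Fin n) ℝ) : Matrix (Fin n) (Fin n) ℝ :=
  fun i j => if A i j < 0 then A i j else 0

/-- Entrywise absolute value. -/
def absM {m : Type*} (A : Matrix m m ℝ) : Matrix m m ℝ := fun i j => |A i j|

/-- Laplacian of a (nonnegative) matrix. -/
noncomputable def lap {m : Type*} [Fintype m] [DecidableEq m] (B : Matrix m m ℝ) :
    Matrix m m ℝ :=
  fun i j => if i = j then ∑ k ∈ Finset.univ.erase i, B i k else -B i j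

/-- Signed Laplacian. -/
noncomputable def signedLap {n : ℕ} (A : Matrix (Fin n) (Fin n) ℝ) : Matrix (Fin n) (Fin n) ℝ :=
  fun i j => if i = j then ∑ k ∈ Finset.univ.erase i, |A i k| else -A i j

/-- Diagonal matrix of row sums. -/
noncomputable def deltaM {n : ℕ} (M : Matrix (Fin n) (Fin n) ℝ) : Matrix (Fin n) (Fin n) ℝ :=
  Matrix.diagonal (fun i => ∑ j, M i j)


notation "mexp" => NormedSpace.exp

open Filter Topology

section Aux

variable {n : ℕ}

attribute [local instance] Matrix.linftyOpNormedRing Matrix.linftyOpNormedAlgebra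

lemma pow_abs_entry_le {X Y : Matrix (Fin n) (Fin n) ℝ} (h : ∀ i j, |X i j| ≤ Y i j) :
    ∀ (k : ℕ) i j, |(X ^ k) i j| ≤ (Y ^ k) i j := by
  intro k
  induction k with
  | zero =>
    intro i j
    simp only [pow_zero, Matrix.one_apply]
    split <;> simp
  | succ k ih =>
    intro i j
    rw [pow_succ, pow_succ, Matrix.mul_apply, Matrix.mul_apply]
    calc |∑ l, (X ^ k) i l * X l j| ≤ ∑ l, |(X ^ k) i l * X l j| :=
          Finset.abs_sum_le_sum_abs _ _
      _ ≤ ∑ l, (Y ^ k) i l * Y l j := by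
          refine Finset.sum_le_sum fun l _ => ?_
          rw [abs_mul]
          exact mul_le_mul (ih i l) (h l j) (abs_nonneg _)
            ((abs_nonneg _).trans (ih i l))

lemma exp_entry_eq (X : Matrix (Fin n) (Fin n) ℝ) (i j : Fin n) :
    (mexp X) i j = ∑' (k : ℕ), (k.factorial : ℝ)⁻¹ * (X ^ k) i j := by
  simp only [NormedSpace.exp_eq_tsum ℝ]
  have hs : Summable fun k : ℕ => (k.factorial : ℝ)⁻¹ • X ^ k :=
    NormedSpace.expSeries_summable' (𝕂 := ℝ) X
  have hs1 : Summable fun k : ℕ => ((k.factorial : ℝ)⁻¹ • X ^ k) i := by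
    exact (Pi.summable).mp hs i
  erw [tsum_apply hs, tsum_apply hs1]
  simp [smul_eq_mul]

lemma summable_exp_entry (X : Matrix (Fin n) (Fin n) ℝ) (i j : Fin n) :
    Summable fun k : ℕ => (k.factorial : ℝ)⁻¹ * (X ^ k) i j := by
  have hs : Summable fun k : ℕ => (k.factorial : ℝ)⁻¹ • X ^ k :=
    NormedSpace.expSeries_summable' (𝕂 := ℝ) X
  have hs1 : Summable fun k : ℕ => ((k.factorial : ℝ)⁻¹ • X ^ k) i := (Pi.summable).mp hs i
  have hs2 : Summable fun k : ℕ => ((k.factorial : ℝ)⁻¹ • X ^ k) i j := (Pi.summable).mp hs1 j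
  simpa [smul_eq_mul] using hs2

set_option maxHeartbeats 1000000 in
lemma exp_abs_entry_le {X Y : Matrix (Fin n) (Fin n) ℝ} (h : ∀ i j, |X i j| ≤ Y i j)
    (i j : Fin n) : |(mexp X) i j| ≤ (mexp Y) i j := by
  rw [exp_entry_eq, exp_entry_eq]
  have hY := summable_exp_entry Y i j
  have habs : Summable fun k : ℕ => |(k.factorial : ℝ)⁻¹ * (X ^ k) i j| := by
    refine Summable.of_nonneg_of_le (fun k => abs_nonneg _) (fun k => ?_) hY
    rw [abs_mul, abs_inv, Nat.abs_cast]
    exact mul_le_mul_of_nonneg_left (pow_abs_entry_le h k i j) (by positivity)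
  calc |∑' (k : ℕ), (k.factorial : ℝ)⁻¹ * (X ^ k) i j|
      ≤ ∑' (k : ℕ), |(k.factorial : ℝ)⁻¹ * (X ^ k) i j| := by
        have := norm_tsum_le_tsum_norm
          (f := fun k : ℕ => (k.factorial : ℝ)⁻¹ * (X ^ k) i j)
          (by simpa only [Real.norm_eq_abs] using habs)
        simpa only [Real.norm_eq_abs] using this
    _ ≤ ∑' (k : ℕ), (k.factorial : ℝ)⁻¹ * (Y ^ k) i j := by
        refine Summable.tsum_le_tsum (fun k => ?_) habs hY
        rw [abs_mul, abs_inv, Nat.abs_cast]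
        exact mul_le_mul_of_nonneg_left (pow_abs_entry_le h k i j) (by positivity)

lemma exp_shift (Z : Matrix (Fin n) (Fin n) ℝ) (c : ℝ) :
    mexp Z = Real.exp (-c) • mexp (Z + c • (1 : Matrix (Fin n) (Fin n) ℝ)) := by
  have h1 : Z = (Z + c • 1) + (-c) • (1 : Matrix (Fin n) (Fin n) ℝ) := by
    rw [add_assoc, ← add_smul]
    simp
  conv_lhs => rw [h1]
  rw [Matrix.exp_add_of_commute _ _ ((Commute.one_right _).smul_right _)]
  have h2 : ((-c) • (1 : Matrix (Fin n) (Fin n) ℝ)) = algebraMap ℝ _ (-c) :=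
    (Algebra.algebraMap_eq_smul_one _).symm
  rw [h2]
  letI : SeminormedRing (Matrix (Fin n) (Fin n) ℝ) := Matrix.linftyOpSemiNormedRing
  erw [← NormedSpace.algebraMap_exp_comm, ← Real.exp_eq_exp_ℝ,
    Algebra.algebraMap_eq_smul_one, mul_smul_one]

end Aux

theorem stmt7 {n : ℕ} (A : Matrix (Fin n) (Fin n) ℝ) (hdiag : ∀ i, A i i = 0) :
    ∀ t : ℝ, 0 ≤ t → ∀ i j,
      |(mexp (-t • signedLap A)) i j| ≤ (mexp (-t • lap (absM A))) i j := by
  intro t ht i j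
  set c : ℝ := t * ∑ i : Fin n, ∑ k ∈ Finset.univ.erase i, |A i k| with hc
  have hcnn : ∀ i : Fin n, t * (∑ k ∈ Finset.univ.erase i, |A i k|) ≤ c := by
    intro i
    refine mul_le_mul_of_nonneg_left ?_ ht
    exact Finset.single_le_sum (f := fun i => ∑ k ∈ Finset.univ.erase i, |A i k|)
      (fun i _ => Finset.sum_nonneg fun k _ => abs_nonneg _) (Finset.mem_univ i)
  have key : ∀ i' j', |(-t • signedLap A + c • (1 : Matrix (Fin n) (Fin n) ℝ)) i' j'|
      ≤ (-t • lap (absM A) + c • (1 : Matrix (Fin n) (Fin n) ℝ)) i' j' := by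
    intro i' j'
    by_cases h : i' = j'
    · subst h
      simp only [Matrix.add_apply, Matrix.smul_apply, Matrix.one_apply_eq, smul_eq_mul,
        mul_one, signedLap, lap, absM, if_pos rfl, if_true]
      rw [abs_of_nonneg] <;> linarith [hcnn i']
    · simp only [Matrix.add_apply, Matrix.smul_apply, Matrix.one_apply_ne h, smul_eq_mul,
        mul_zero, add_zero, signedLap, lap, absM, if_neg h]
      rw [abs_mul, abs_neg, abs_of_nonneg ht, abs_neg, neg_mul_neg]
  rw [exp_shift (-t • signedLap A) c, exp_shift (-t • lap (absM A)) c]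
  simp only [Matrix.smul_apply, smul_eq_mul, abs_mul, abs_of_pos (Real.exp_pos _)]
  exact mul_le_mul_of_nonneg_left (exp_abs_entry_le key i j) (Real.exp_pos _).le
end

section
/- Let A ∈ ℝ^{n×n} have zero diagonal and L its signed Laplacian. Then for all t ≥ 0, the operator ∞-norm (maximum absolute row sum) of exp(-tL) is at most 1: ‖exp(-tL)‖_∞ ≤ 1. -/
open Matrix Finset

open Filter Topology

set_option maxHeartbeats 1000000

lemma pow_entry_nonneg {m : Type*} [Fintype m] [DecidableEq m] (P : Matrix m m ℝ)
    (hP : ∀ i j, 0 ≤ P i j) (k : ℕ) : ∀ i j, 0 ≤ (P ^ k) i j := by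
  induction k with
  | zero => intro i j; simp [Matrix.one_apply]; positivity
  | succ k ih =>
    intro i j
    rw [pow_succ, Matrix.mul_apply]
    exact Finset.sum_nonneg fun l _ => mul_nonneg (ih i l) (hP l j)

lemma abs_pow_entry_le {m : Type*} [Fintype m] [DecidableEq m] (M : Matrix m m ℝ) (k : ℕ) :
    ∀ i j, |(M ^ k) i j| ≤ ((absM M) ^ k) i j := by
  induction k with
  | zero => intro i j; simp [Matrix.one_apply]; split <;> simp
  | succ k ih =>
    intro i j
    rw [pow_succ, pow_succ, Matrix.mul_apply, Matrix.mul_apply]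
    calc |∑ l, (M ^ k) i l * M l j| ≤ ∑ l, |(M ^ k) i l * M l j| := Finset.abs_sum_le_sum_abs _ _
    _ ≤ ∑ l, ((absM M) ^ k) i l * (absM M) l j := by
        refine Finset.sum_le_sum fun l _ => ?_
        rw [abs_mul]
        exact mul_le_mul (ih i l) (le_refl _) (abs_nonneg _)
          (pow_entry_nonneg (absM M) (fun _ _ => abs_nonneg _) k i l)
    _ = _ := rfl

lemma rowsum_pow {m : Type*} [Fintype m] [DecidableEq m] (P : Matrix m m ℝ) (r : ℝ)
    (h : ∀ i, ∑ j, P i j = r) (k : ℕ) : ∀ i, ∑ j, (P ^ k) i j = r ^ k := by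
  induction k with
  | zero => intro i; simp [Matrix.one_apply]
  | succ k ih =>
    intro i
    rw [pow_succ']
    simp only [Matrix.mul_apply]
    rw [Finset.sum_comm]
    calc ∑ l, ∑ j, P i l * (P ^ k) l j = ∑ l, P i l * r ^ k := by
          refine Finset.sum_congr rfl fun l _ => ?_
          rw [← Finset.mul_sum, ih l]
    _ = r ^ (k + 1) := by rw [← Finset.sum_mul, h i, pow_succ']

theorem stmt8 {n : ℕ} (A : Matrix (Fin n) (Fin n) ℝ) (hdiag : ∀ i, A i i = 0) :
    ∀ t : ℝ, 0 ≤ t → ∀ i, ∑ j, |(mexp (-t • signedLap A)) i j| ≤ 1 := by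
  intro t ht i
  set s : Fin n → ℝ := fun i => ∑ k ∈ Finset.univ.erase i, |A i k| with hs
  set c : ℝ := ∑ p, ∑ q, |A p q| with hc
  have hs_nonneg : ∀ p, 0 ≤ s p := fun p => Finset.sum_nonneg fun _ _ => abs_nonneg _
  have hsc : ∀ p, s p ≤ c := by
    intro p
    calc s p ≤ ∑ q, |A p q| :=
          Finset.sum_le_sum_of_subset_of_nonneg (Finset.erase_subset _ _)
            (fun _ _ _ => abs_nonneg _)
    _ ≤ c := Finset.single_le_sum (f := fun p => ∑ q, |A p q|)
          (fun _ _ => Finset.sum_nonneg fun _ _ => abs_nonneg _) (Finset.mem_univ p)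
  have hc0 : 0 ≤ c := le_trans (hs_nonneg i) (hsc i)
  set N : Matrix (Fin n) (Fin n) ℝ := (t * c) • (1 : Matrix (Fin n) (Fin n) ℝ) - t • signedLap A
    with hN
  -- entries of absM N
  have hval : ∀ p q, N p q = if p = q then t * c - t * s p else t * A p q := by
    intro p q
    by_cases hpq : p = q
    · subst hpq
      simp only [hN, Matrix.sub_apply, Matrix.smul_apply, Matrix.one_apply_eq, smul_eq_mul,
        mul_one, signedLap, if_pos rfl, hs]
      simp
    · simp only [hN, Matrix.sub_apply, Matrix.smul_apply, Matrix.one_apply_ne hpq,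
        smul_eq_mul, mul_zero, signedLap, if_neg hpq, zero_sub]
      ring
  have habsN : ∀ p q, absM N p q = if p = q then t * c - t * s p else t * |A p q| := by
    intro p q
    by_cases hpq : p = q
    · subst hpq
      show |N p p| = _
      rw [hval, if_pos rfl, if_pos rfl, abs_of_nonneg]
      have : t * s p ≤ t * c := mul_le_mul_of_nonneg_left (hsc p) ht
      linarith
    · show |N p q| = _
      rw [hval, if_neg hpq, if_neg hpq, abs_mul, abs_of_nonneg ht]
  -- row sums of absM N are t*c
  have hrow : ∀ p, ∑ q, absM N p q = t * c := by
    intro p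
    rw [← Finset.add_sum_erase _ _ (Finset.mem_univ p)]
    have h1 : absM N p p = t * c - t * s p := by rw [habsN]; simp
    have h2 : ∑ q ∈ Finset.univ.erase p, absM N p q = t * s p := by
      rw [Finset.mul_sum]
      refine Finset.sum_congr rfl fun q hq => ?_
      rw [habsN, if_neg (Finset.ne_of_mem_erase hq).symm]
    rw [h1, h2]; ring
  -- entrywise bound on powers
  have hNabs_nonneg : ∀ p q, 0 ≤ absM N p q := fun _ _ => abs_nonneg _
  have hpow_le : ∀ (k : ℕ) (p q : Fin n), ((absM N) ^ k) p q ≤ (t * c) ^ k := by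
    intro k p q
    calc ((absM N) ^ k) p q ≤ ∑ q', ((absM N) ^ k) p q' :=
          Finset.single_le_sum (fun q' _ => pow_entry_nonneg _ hNabs_nonneg k p q')
            (Finset.mem_univ q)
    _ = (t * c) ^ k := rowsum_pow _ _ hrow k p
  have hNpow_le : ∀ (k : ℕ) (p q : Fin n), |(N ^ k) p q| ≤ (t * c) ^ k :=
    fun k p q => le_trans (abs_pow_entry_le N k p q) (hpow_le k p q)
  -- summability helpers
  have hg : Summable fun k : ℕ => (t * c) ^ k / (k.factorial : ℝ) := Real.summable_pow_div_factorial _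
  have hentN : ∀ p q, Summable fun k : ℕ => ((k.factorial : ℝ)⁻¹ • N ^ k) p q := by
    intro p q
    refine Summable.of_norm_bounded hg fun k => ?_
    simp only [Matrix.smul_apply, smul_eq_mul, Real.norm_eq_abs, abs_mul, abs_inv,
      abs_of_nonneg (Nat.cast_nonneg k.factorial : (0:ℝ) ≤ (k.factorial:ℝ)), div_eq_inv_mul]
    exact mul_le_mul_of_nonneg_left (hNpow_le k p q) (inv_nonneg.2 (Nat.cast_nonneg _))
  have hentA : ∀ p q, Summable fun k : ℕ => ((k.factorial : ℝ)⁻¹ • (absM N) ^ k) p q := by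
    intro p q
    refine Summable.of_norm_bounded hg fun k => ?_
    simp only [Matrix.smul_apply, smul_eq_mul, Real.norm_eq_abs, abs_mul, abs_inv,
      abs_of_nonneg (Nat.cast_nonneg k.factorial : (0:ℝ) ≤ (k.factorial:ℝ)), div_eq_inv_mul]
    rw [abs_of_nonneg (pow_entry_nonneg _ hNabs_nonneg k p q)]
    exact mul_le_mul_of_nonneg_left (hpow_le k p q) (inv_nonneg.2 (Nat.cast_nonneg _))
  have hsumN : Summable fun k : ℕ => (k.factorial : ℝ)⁻¹ • N ^ k :=
    Pi.summable.2 fun p => Pi.summable.2 fun q => hentN p q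
  have hsumA : Summable fun k : ℕ => (k.factorial : ℝ)⁻¹ • (absM N) ^ k :=
    Pi.summable.2 fun p => Pi.summable.2 fun q => hentA p q
  -- entries of exp as tsums
  have hexp_entry : ∀ (M : Matrix (Fin n) (Fin n) ℝ),
      (Summable fun k : ℕ => (k.factorial : ℝ)⁻¹ • M ^ k) →
      ∀ p q, (mexp M) p q = ∑' k : ℕ, ((k.factorial : ℝ)⁻¹ • M ^ k) p q := by
    intro M hM p q
    have hE : mexp M = ∑' k : ℕ, (k.factorial : ℝ)⁻¹ • M ^ k := by
      rw [NormedSpace.exp_eq_tsum ℝ]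
    rw [hE]
    exact ((Pi.hasSum.1 (Pi.hasSum.1 hM.hasSum p) q).tsum_eq).symm
  -- exp split
  have hsplit : mexp (-t • signedLap A) =
      Real.exp (-(t * c)) • mexp N := by
    have hLN : -t • signedLap A = (-(t * c)) • (1 : Matrix (Fin n) (Fin n) ℝ) + N := by
      ext p q
      simp [hN, Matrix.sub_apply, Matrix.add_apply, Matrix.smul_apply]
      ring
    rw [hLN, Matrix.exp_add_of_commute _ _ ((Commute.one_left N).smul_left (-(t * c)))]
    rw [Matrix.smul_one_eq_diagonal, Matrix.exp_diagonal]
    have : mexp (fun _ : Fin n => -(t * c)) = fun _ : Fin n => Real.exp (-(t * c)) := by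
      rw [Pi.exp_def, Real.exp_eq_exp_ℝ]
    rw [this]
    ext p q
    rw [Matrix.smul_apply, Matrix.diagonal_mul]
    simp [smul_eq_mul]
  -- entry bound: |exp N p q| ≤ exp (absM N) p q
  have hbound : ∀ p q, |(mexp N) p q| ≤ (mexp (absM N)) p q := by
    intro p q
    rw [hexp_entry N hsumN p q, hexp_entry (absM N) hsumA p q]
    calc |∑' k : ℕ, ((k.factorial : ℝ)⁻¹ • N ^ k) p q|
        ≤ ∑' k : ℕ, |((k.factorial : ℝ)⁻¹ • N ^ k) p q| := by
          have := norm_tsum_le_tsum_norm (f := fun k : ℕ => ((k.factorial : ℝ)⁻¹ • N ^ k) p q)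
            (by simp only [Real.norm_eq_abs]; exact (hentN p q).abs)
          simp only [Real.norm_eq_abs] at this
          exact this
    _ ≤ ∑' k : ℕ, ((k.factorial : ℝ)⁻¹ • (absM N) ^ k) p q := by
          refine Summable.tsum_le_tsum (fun k => ?_) (hentN p q).abs (hentA p q)
          simp only [Matrix.smul_apply, smul_eq_mul, abs_mul, abs_inv]
          rw [abs_of_nonneg (Nat.cast_nonneg k.factorial : (0:ℝ) ≤ (k.factorial:ℝ))]
          exact mul_le_mul_of_nonneg_left (abs_pow_entry_le N k p q)
            (inv_nonneg.2 (Nat.cast_nonneg _))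
  -- row sum of exp (absM N)
  have hrowexp : ∑ j, (mexp (absM N)) i j = Real.exp (t * c) := by
    have h1 : ∀ j : Fin n, (mexp (absM N)) i j = ∑' k : ℕ, ((k.factorial : ℝ)⁻¹ • (absM N) ^ k) i j :=
      hexp_entry (absM N) hsumA i
    simp_rw [h1]
    have h2 : HasSum (fun k : ℕ => ∑ j, ((k.factorial : ℝ)⁻¹ • (absM N) ^ k) i j)
        (∑ j, ∑' k : ℕ, ((k.factorial : ℝ)⁻¹ • (absM N) ^ k) i j) :=
      hasSum_sum fun j _ => (hentA i j).hasSum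
    rw [← h2.tsum_eq]
    have h3 : ∀ k : ℕ, ∑ j, ((k.factorial : ℝ)⁻¹ • (absM N) ^ k) i j = (k.factorial : ℝ)⁻¹ • (t * c) ^ k := by
      intro k
      simp only [Matrix.smul_apply, smul_eq_mul, ← Finset.mul_sum]
      rw [rowsum_pow _ _ hrow k i]
    simp_rw [h3]
    rw [Real.exp_eq_exp_ℝ, NormedSpace.exp_eq_tsum ℝ]
  -- conclude
  calc ∑ j, |(mexp (-t • signedLap A)) i j|
      = ∑ j, Real.exp (-(t * c)) * |(mexp N) i j| := by
        refine Finset.sum_congr rfl fun j _ => ?_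
        rw [hsplit, Matrix.smul_apply, smul_eq_mul, abs_mul, abs_of_nonneg (Real.exp_pos _).le]
  _ ≤ ∑ j, Real.exp (-(t * c)) * (mexp (absM N)) i j :=
        Finset.sum_le_sum fun j _ =>
          mul_le_mul_of_nonneg_left (hbound i j) (Real.exp_pos _).le
  _ = Real.exp (-(t * c)) * Real.exp (t * c) := by rw [← Finset.mul_sum, hrowexp]
  _ = 1 := by rw [← Real.exp_add]; simp
end

section
/- Suppose every solution x : [t₀,∞) → ℝⁿ of ẋ = -L x satisfies ‖x(t)‖_∞ ≤ ‖x(t₀)‖_∞ for all t ≥ t₀, where L is the signed Laplacian of a fixed matrix A with zero diagonal. Equivalently, exp(-(t-t₀)L) applied to any initial state x₀ satisfies ‖exp(-(t-t₀)L)x₀‖_∞ ≤ ‖x₀‖_∞ for all t ≥ t₀. -/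
open Matrix Finset

open Filter Topology

lemma norm_exp_le_exp_norm' {𝔸 : Type*} [NormedRing 𝔸] [NormOneClass 𝔸] [NormedAlgebra ℝ 𝔸]
    [CompleteSpace 𝔸] (x : 𝔸) : ‖NormedSpace.exp x‖ ≤ Real.exp ‖x‖ := by
  rw [NormedSpace.exp_eq_tsum ℝ]
  refine (norm_tsum_le_tsum_norm (NormedSpace.norm_expSeries_summable' x)).trans ?_
  rw [Real.exp_eq_exp_ℝ, NormedSpace.exp_eq_tsum ℝ]
  refine Summable.tsum_le_tsum (fun n => ?_) (NormedSpace.norm_expSeries_summable' x)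
    (NormedSpace.expSeries_summable' (𝕂 := ℝ) ‖x‖)
  rw [norm_smul, norm_inv, Real.norm_natCast, smul_eq_mul]
  exact mul_le_mul_of_nonneg_left (norm_pow_le x n) (by positivity)


theorem stmt9 {n : ℕ} (A : Matrix (Fin n) (Fin n) ℝ) (hdiag : ∀ i, A i i = 0) :
    ∀ t₀ t : ℝ, t₀ ≤ t → ∀ x₀ : Fin n → ℝ,
      ‖(mexp (-(t - t₀) • signedLap A)).mulVec x₀‖ ≤ ‖x₀‖ := by
  intro t₀ t ht x₀
  rcases Nat.eq_zero_or_pos n with hn | hn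
  · subst hn
    rw [Subsingleton.elim ((mexp (-(t - t₀) • signedLap A)).mulVec x₀) x₀]
  haveI : Nonempty (Fin n) := ⟨⟨0, hn⟩⟩
  set s : ℝ := t - t₀ with hsdef
  have hs0 : 0 ≤ s := sub_nonneg.2 ht
  set L := signedLap A with hL
  set c : ℝ := ∑ i, ∑ k, |A i k| with hc
  have hc0 : 0 ≤ c := by positivity
  set M : Matrix (Fin n) (Fin n) ℝ := c • 1 - L with hM
  -- row sums of |M| are ≤ c
  have hrow : ∀ i, ∑ j, ‖M i j‖ ≤ c := by
    intro i
    have hLi : L i i = ∑ k ∈ Finset.univ.erase i, |A i k| := by simp [hL, signedLap]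
    have hLic : L i i ≤ c := by
      rw [hLi, hc]
      calc ∑ k ∈ Finset.univ.erase i, |A i k| ≤ ∑ k, |A i k| :=
            Finset.sum_le_sum_of_subset_of_nonneg (Finset.erase_subset _ _)
              (fun _ _ _ => abs_nonneg _)
        _ ≤ ∑ i', ∑ k, |A i' k| :=
            Finset.single_le_sum (f := fun i' => ∑ k, |A i' k|)
              (fun _ _ => Finset.sum_nonneg fun _ _ => abs_nonneg _) (Finset.mem_univ i)
    have hMii : M i i = c - L i i := by simp [hM, Matrix.one_apply]
    have hMoff : ∀ j, j ≠ i → ‖M i j‖ = |A i j| := by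
      intro j hj
      have : M i j = A i j := by
        simp [hM, hL, signedLap, Matrix.one_apply, (Ne.symm hj : i ≠ j)]
      rw [this, Real.norm_eq_abs]
    rw [← Finset.add_sum_erase _ _ (Finset.mem_univ i)]
    have h1 : ‖M i i‖ = c - L i i := by
      rw [hMii, Real.norm_eq_abs, abs_of_nonneg (sub_nonneg.2 hLic)]
    have h2 : ∑ j ∈ Finset.univ.erase i, ‖M i j‖ = L i i := by
      rw [hLi]
      refine Finset.sum_congr rfl fun j hj => ?_
      exact hMoff j (Finset.ne_of_mem_erase hj)
    rw [h1, h2]; linarith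
  -- operator norm bound in linfty norm
  have key : ‖(mexp (s • M)).mulVec x₀‖ ≤ Real.exp (s * c) * ‖x₀‖ := by
    letI : SeminormedRing (Matrix (Fin n) (Fin n) ℝ) := Matrix.linftyOpSemiNormedRing
    letI : NormedRing (Matrix (Fin n) (Fin n) ℝ) := Matrix.linftyOpNormedRing
    letI : NormedAlgebra ℝ (Matrix (Fin n) (Fin n) ℝ) := Matrix.linftyOpNormedAlgebra
    haveI : NormOneClass (Matrix (Fin n) (Fin n) ℝ) :=
      ⟨(Matrix.linfty_opNorm_diagonal _).trans norm_one⟩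
    have hMnorm : ‖M‖ ≤ c := by
      rw [Matrix.linfty_opNorm_def]
      have : ((Finset.univ : Finset (Fin n)).sup fun i => ∑ j, ‖M i j‖₊ : NNReal) ≤ (⟨c, hc0⟩ : NNReal) := by
        refine Finset.sup_le fun i _ => ?_
        apply NNReal.coe_le_coe.1
        push_cast
        exact hrow i
      exact_mod_cast this
    calc ‖(mexp (s • M)).mulVec x₀‖ ≤ ‖mexp (s • M)‖ * ‖x₀‖ :=
          Matrix.linfty_opNorm_mulVec _ _
      _ ≤ Real.exp ‖s • M‖ * ‖x₀‖ := by
          gcongr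
          exact norm_exp_le_exp_norm' _
      _ ≤ Real.exp (s * c) * ‖x₀‖ := by
          gcongr
          rw [norm_smul, Real.norm_eq_abs, abs_of_nonneg hs0]
          exact mul_le_mul_of_nonneg_left hMnorm hs0
  -- split the exponential
  have hsplit : -s • L = (-(s * c)) • (1 : Matrix (Fin n) (Fin n) ℝ) + s • M := by
    rw [hM, smul_sub, smul_smul]
    ext i j
    simp [Matrix.add_apply, Matrix.sub_apply, Matrix.smul_apply]
    ring
  have hcomm : Commute ((-(s * c)) • (1 : Matrix (Fin n) (Fin n) ℝ)) (s • M) :=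
    ((Commute.one_left (s • M)).smul_left _)
  have h1 : mexp ((-(s * c)) • (1 : Matrix (Fin n) (Fin n) ℝ)) =
      Real.exp (-(s * c)) • 1 := by
    have hd : (-(s * c)) • (1 : Matrix (Fin n) (Fin n) ℝ) =
        Matrix.diagonal (fun _ => -(s * c)) := by
      ext i j
      by_cases h : i = j <;> simp [h, Matrix.one_apply, Matrix.diagonal_apply]
    rw [hd, Matrix.exp_diagonal]
    ext i j
    by_cases h : i = j <;>
      simp [h, Matrix.diagonal_apply, Matrix.one_apply, ← Real.exp_eq_exp_ℝ]
  rw [hsplit, Matrix.exp_add_of_commute _ _ hcomm, h1, smul_mul_assoc, one_mul,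
    Matrix.smul_mulVec, norm_smul, Real.norm_eq_abs,
    abs_of_pos (Real.exp_pos _)]
  calc Real.exp (-(s * c)) * ‖(mexp (s • M)).mulVec x₀‖
      ≤ Real.exp (-(s * c)) * (Real.exp (s * c) * ‖x₀‖) := by
        gcongr
    _ = ‖x₀‖ := by rw [← mul_assoc, ← Real.exp_add, neg_add_cancel, Real.exp_zero, one_mul]
end

section
/- Let A ∈ ℝ^{n×n} have zero diagonal and D ∈ 𝓓_n satisfy DAD = |A|. If exp(-t𝓛_{|A|}) converges as t → ∞ to the rank-one stochastic matrix 1_n νᵀ for some nonnegative vector ν with νᵀ1_n = 1, then exp(-tL) converges as t → ∞ to (D1_n)(νᵀD), and every solution of ẋ = -Lx converges to (νᵀD x₀)·(D1_n), i.e., bipartite consensus is achieved. -/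
open Matrix Finset

open Filter Topology

open Filter Topology in
private lemma signedLap_conj {n : ℕ} (A : Matrix (Fin n) (Fin n) ℝ)
    (d : Fin n → ℝ) (hd : ∀ i, d i = 1 ∨ d i = -1)
    (hbal : Matrix.diagonal d * A * Matrix.diagonal d = absM A) :
    signedLap A = Matrix.diagonal d * lap (absM A) * Matrix.diagonal d := by
  have hdsq : ∀ i, d i * d i = 1 := fun i => by rcases hd i with h | h <;> rw [h] <;> norm_num
  ext i j
  have hb := congrFun (congrFun hbal i) j
  rw [Matrix.mul_diagonal, Matrix.diagonal_mul] at hb ⊢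
  simp only [signedLap, lap, absM] at *
  have key : d i * |A i j| * d j = A i j := by
    rw [← hb]
    have h2 : d i * (d i * A i j * d j) * d j = (d i * d i) * ((d j * d j) * A i j) := by ring
    rw [h2, hdsq i, hdsq j, one_mul, one_mul]
  rcases eq_or_ne i j with rfl | hij
  · rw [mul_comm (d i) _, mul_assoc, hdsq, mul_one]
    simp
  · simp only [if_neg hij]
    rw [mul_neg, neg_mul, key]


theorem stmt12 {n : ℕ} (A : Matrix (Fin n) (Fin n) ℝ) (hdiag : ∀ i, A i i = 0)
    (d : Fin n → ℝ) (hd : ∀ i, d i = 1 ∨ d i = -1)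
    (hbal : Matrix.diagonal d * A * Matrix.diagonal d = absM A)
    (ν : Fin n → ℝ) (hν0 : ∀ i, 0 ≤ ν i) (hν1 : ∑ i, ν i = 1)
    (hconv : Tendsto (fun t : ℝ => mexp (-t • lap (absM A))) atTop
      (nhds (Matrix.of fun _ j => ν j))) :
    Tendsto (fun t : ℝ => mexp (-t • signedLap A)) atTop
      (nhds (Matrix.of fun i j => d i * (ν j * d j))) ∧
    ∀ x₀ : Fin n → ℝ,
      Tendsto (fun t : ℝ => (mexp (-t • signedLap A)).mulVec x₀) atTop
        (nhds ((∑ j, ν j * d j * x₀ j) • d)) := by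
  have hdsq : ∀ i, d i * d i = 1 := fun i => by rcases hd i with h | h <;> rw [h] <;> norm_num
  set D := Matrix.diagonal d with hD
  have hD2 : D * D = 1 := by
    rw [hD, Matrix.diagonal_mul_diagonal]
    convert Matrix.diagonal_one
    exact hdsq _
  have hUnit : IsUnit D := ⟨⟨D, D, hD2, hD2⟩, rfl⟩
  have hinv : D⁻¹ = D := Matrix.inv_eq_right_inv hD2
  have hsL := signedLap_conj A d hd hbal
  have hexp : ∀ t : ℝ, mexp (-t • signedLap A) = D * mexp (-t • lap (absM A)) * D := by
    intro t
    have h1 : -t • signedLap A = D * (-t • lap (absM A)) * D⁻¹ := by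
      rw [hinv, hsL, Matrix.mul_smul, Matrix.smul_mul]
    rw [h1, Matrix.exp_conj D (-t • lap (absM A)) hUnit, hinv]
  have hcont : Continuous fun M : Matrix (Fin n) (Fin n) ℝ => D * M * D :=
    (continuous_const.matrix_mul continuous_id).matrix_mul continuous_const
  have hlim1 : Tendsto (fun t : ℝ => mexp (-t • signedLap A)) atTop
      (nhds (D * (Matrix.of fun _ j => ν j) * D)) := by
    simp only [hexp]
    exact (hcont.tendsto _).comp hconv
  have hlimeq : D * (Matrix.of fun _ j => ν j) * D =
      (Matrix.of fun i j => d i * (ν j * d j)) := by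
    ext i j
    rw [Matrix.mul_diagonal, Matrix.diagonal_mul]
    simp [mul_assoc]
  rw [hlimeq] at hlim1
  refine ⟨hlim1, fun x₀ => ?_⟩
  rw [tendsto_pi_nhds]
  intro i
  have hentry : ∀ j, Tendsto (fun t : ℝ => mexp (-t • signedLap A) i j) atTop
      (nhds (d i * (ν j * d j))) := fun j =>
    tendsto_pi_nhds.mp (tendsto_pi_nhds.mp hlim1 i) j
  have hsum : Tendsto (fun t : ℝ => ∑ j, mexp (-t • signedLap A) i j * x₀ j) atTop
      (nhds (∑ j, d i * (ν j * d j) * x₀ j)) :=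
    tendsto_finset_sum _ fun j _ => (hentry j).mul tendsto_const_nhds
  have heq : (∑ j, d i * (ν j * d j) * x₀ j) = ((∑ j, ν j * d j * x₀ j) • d) i := by
    rw [Pi.smul_apply, smul_eq_mul, Finset.sum_mul]
    exact Finset.sum_congr rfl fun j _ => by ring
  rw [heq] at hsum
  exact hsum
end

section
/- Let A ∈ ℝ^{n×n} have zero diagonal, L its signed Laplacian, 𝓛_{|A|} the Laplacian of |A|, and 𝓛_𝐀 the Laplacian of the lifted matrix 𝐀 = [[A⁺, |A⁻|],[|A⁻|, A⁺]]. Then for all t, exp(-t𝓛_𝐀) equals the 2×2 block matrix [[Φ_even(t), Φ_odd(t)],[Φ_odd(t), Φ_even(t)]], where Φ_even(t) = (exp(-tL)+exp(-t𝓛_{|A|}))/2 and Φ_odd(t) = (exp(-t𝓛_{|A|})-exp(-tL))/2. -/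
open Matrix Finset

open Filter Topology

/-- exponential of a block-diagonal 2×2 block matrix. -/
lemma exp_fromBlocks_diag {n : ℕ} (X Y : Matrix (Fin n) (Fin n) ℝ) :
    mexp (Matrix.fromBlocks X 0 0 Y) = Matrix.fromBlocks (mexp X) 0 0 (mexp Y) := by
  letI : SeminormedRing (Matrix (Fin n) (Fin n) ℝ) := Matrix.linftyOpSemiNormedRing
  letI : NormedRing (Matrix (Fin n) (Fin n) ℝ) := Matrix.linftyOpNormedRing
  letI : NormedAlgebra ℝ (Matrix (Fin n) (Fin n) ℝ) := Matrix.linftyOpNormedAlgebra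
  have hpow : ∀ k : ℕ, Matrix.fromBlocks X 0 0 Y ^ k
      = Matrix.fromBlocks (X ^ k) 0 0 (Y ^ k) := by
    intro k
    induction k with
    | zero => simp [Matrix.fromBlocks_one]
    | succ k ih =>
        rw [pow_succ, pow_succ, pow_succ, ih, Matrix.fromBlocks_multiply]
        simp
  have hX := NormedSpace.exp_series_hasSum_exp' (𝕂 := ℝ) X
  have hY := NormedSpace.exp_series_hasSum_exp' (𝕂 := ℝ) Y
  have hmap : HasSum (fun k : ℕ => (((Nat.factorial k : ℝ)⁻¹ • X ^ k,
      (Nat.factorial k : ℝ)⁻¹ • Y ^ k) :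
      Matrix (Fin n) (Fin n) ℝ × Matrix (Fin n) (Fin n) ℝ)) (mexp X, mexp Y) := hX.prodMk hY
  let Φ : Matrix (Fin n) (Fin n) ℝ × Matrix (Fin n) (Fin n) ℝ →+
      Matrix (Fin n ⊕ Fin n) (Fin n ⊕ Fin n) ℝ :=
    { toFun := fun p => Matrix.fromBlocks p.1 0 0 p.2
      map_zero' := by simp
      map_add' := by
        intro p q
        simp [Matrix.fromBlocks_add] }
  have hΦ : Continuous Φ := by
    exact Continuous.matrix_fromBlocks continuous_fst continuous_const continuous_const
      continuous_snd
  have hsum := hmap.map Φ hΦ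
  rw [NormedSpace.exp_eq_tsum ℝ]
  refine HasSum.tsum_eq ?_
  have hfun : (fun k : ℕ => (Nat.factorial k : ℝ)⁻¹ • Matrix.fromBlocks X 0 0 Y ^ k)
      = fun k : ℕ => Φ ((Nat.factorial k : ℝ)⁻¹ • X ^ k, (Nat.factorial k : ℝ)⁻¹ • Y ^ k) := by
    funext k
    show _ = Matrix.fromBlocks ((Nat.factorial k : ℝ)⁻¹ • X ^ k) 0 0
      ((Nat.factorial k : ℝ)⁻¹ • Y ^ k)
    rw [hpow k, Matrix.fromBlocks_smul]
    simp
  rw [hfun]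
  exact hsum

theorem stmt14 {n : ℕ} (A : Matrix (Fin n) (Fin n) ℝ) (hdiag : ∀ i, A i i = 0) :
    ∀ t : ℝ,
      mexp (-t • lap (Matrix.fromBlocks (matPos A) (absM (matNeg A))
          (absM (matNeg A)) (matPos A))) =
      Matrix.fromBlocks
        ((2⁻¹ : ℝ) • (mexp (-t • signedLap A) + mexp (-t • lap (absM A))))
        ((2⁻¹ : ℝ) • (mexp (-t • lap (absM A)) - mexp (-t • signedLap A)))
        ((2⁻¹ : ℝ) • (mexp (-t • lap (absM A)) - mexp (-t • signedLap A)))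
        ((2⁻¹ : ℝ) • (mexp (-t • signedLap A) + mexp (-t • lap (absM A)))) := by
  intro t
  set P := matPos A with hP
  set N := absM (matNeg A) with hN
  set L1 := signedLap A with hL1
  set L2 := lap (absM A) with hL2
  -- pointwise facts
  have hPN : ∀ i j, P i j + N i j = |A i j| := by
    intro i j
    simp only [hP, hN, matPos, matNeg, absM]
    rcases lt_trichotomy (A i j) 0 with h | h | h
    · rw [if_neg (by linarith), if_pos h]; simp
    · simp [h]
    · rw [if_pos h, if_neg (by linarith)]; simp [abs_of_pos h]
  have hN0 : ∀ i, N i i = 0 := by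
    intro i; simp [hN, absM, matNeg, hdiag i]
  have hP0 : ∀ i, P i i = 0 := by
    intro i; simp [hP, matPos, hdiag i]
  -- the key structural identity for the lifted Laplacian
  have key : lap (Matrix.fromBlocks P N N P) =
      Matrix.fromBlocks ((2⁻¹ : ℝ) • (L2 + L1)) ((2⁻¹ : ℝ) • (L2 - L1))
        ((2⁻¹ : ℝ) • (L2 - L1)) ((2⁻¹ : ℝ) • (L2 + L1)) := by
    have hdiagsum : ∀ i : Fin n,
        (∑ k ∈ Finset.univ.erase i, P i k) + (∑ k : Fin n, N i k)
          = ∑ k ∈ Finset.univ.erase i, |A i k| := by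
      intro i
      have h1 : (∑ k : Fin n, N i k) = ∑ k ∈ Finset.univ.erase i, N i k := by
        rw [← Finset.add_sum_erase _ _ (Finset.mem_univ i), hN0 i, zero_add]
      rw [h1, ← Finset.sum_add_distrib]
      exact Finset.sum_congr rfl fun k _ => hPN i k
    have hoffP : ∀ i j : Fin n, i ≠ j →
        -P i j = 2⁻¹ * (-|A i j| + -A i j) := by
      intro i j _
      simp only [hP, matPos]
      rcases le_or_gt (A i j) 0 with h | h
      · rw [if_neg (by linarith), abs_of_nonpos h]; ring
      · rw [if_pos h, abs_of_pos h]; ring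
    have hoffN : ∀ i j : Fin n,
        -N i j = 2⁻¹ * (-|A i j| - -A i j) := by
      intro i j
      simp only [hN, absM, matNeg]
      rcases le_or_gt (A i j) 0 with h | h
      · rcases eq_or_lt_of_le h with h' | h'
        · rw [h']; simp
        · rw [if_pos h', abs_of_neg h']; ring
      · rw [if_neg (by linarith), abs_of_pos h]
        simp
    have lapdiag : ∀ (i : Fin n ⊕ Fin n), lap (Matrix.fromBlocks P N N P) i i
        = ∑ k ∈ Finset.univ.erase i, Matrix.fromBlocks P N N P i k := fun i => if_pos rfl
    have lapoff : ∀ (i j : Fin n ⊕ Fin n), i ≠ j → lap (Matrix.fromBlocks P N N P) i j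
        = -Matrix.fromBlocks P N N P i j := fun i j h => if_neg h
    have hL1d : ∀ i : Fin n, L1 i i = ∑ k ∈ Finset.univ.erase i, |A i k| := by
      intro i; simp [hL1, signedLap]
    have hL2d : ∀ i : Fin n, L2 i i = ∑ k ∈ Finset.univ.erase i, |A i k| := by
      intro i; simp [hL2, lap, absM]
    have hL1o : ∀ i j : Fin n, i ≠ j → L1 i j = -A i j := by
      intro i j h; simp [hL1, signedLap, h]
    have hL2o : ∀ i j : Fin n, i ≠ j → L2 i j = -|A i j| := by
      intro i j h; simp [hL2, lap, absM, h]
    have hsum1 : ∀ i : Fin n, ∑ k ∈ (Finset.univ : Finset (Fin n ⊕ Fin n)).erase (Sum.inl i),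
        Matrix.fromBlocks P N N P (Sum.inl i) k
          = (∑ k ∈ Finset.univ.erase i, P i k) + (∑ k : Fin n, N i k) := by
      intro i
      rw [Finset.sum_erase_eq_sub (Finset.mem_univ _), Fintype.sum_sum_type,
        Finset.sum_erase_eq_sub (Finset.mem_univ i)]
      simp only [Matrix.fromBlocks_apply₁₁, Matrix.fromBlocks_apply₁₂]
      ring
    have hsum2 : ∀ i : Fin n, ∑ k ∈ (Finset.univ : Finset (Fin n ⊕ Fin n)).erase (Sum.inr i),
        Matrix.fromBlocks P N N P (Sum.inr i) k
          = (∑ k ∈ Finset.univ.erase i, P i k) + (∑ k : Fin n, N i k) := by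
      intro i
      rw [Finset.sum_erase_eq_sub (Finset.mem_univ _), Fintype.sum_sum_type,
        Finset.sum_erase_eq_sub (Finset.mem_univ i)]
      simp only [Matrix.fromBlocks_apply₂₁, Matrix.fromBlocks_apply₂₂]
      ring
    funext i j
    cases i with
    | inl i =>
      cases j with
      | inl j =>
        by_cases hij : i = j
        · subst hij
          rw [lapdiag, hsum1 i, hdiagsum i]
          simp only [Matrix.fromBlocks_apply₁₁, Matrix.smul_apply, Matrix.add_apply,
            smul_eq_mul]
          rw [hL1d i, hL2d i]; ring
        · rw [lapoff _ _ (by simp [hij])]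
          simp only [Matrix.fromBlocks_apply₁₁, Matrix.smul_apply, Matrix.add_apply,
            smul_eq_mul]
          rw [hL1o i j hij, hL2o i j hij]
          exact hoffP i j hij
      | inr j =>
        rw [lapoff _ _ (by simp)]
        simp only [Matrix.fromBlocks_apply₁₂, Matrix.smul_apply, Matrix.sub_apply,
          smul_eq_mul]
        by_cases hij : i = j
        · subst hij
          rw [hN0 i, hL2d i, hL1d i]; ring
        · rw [hL1o i j hij, hL2o i j hij]
          exact hoffN i j
    | inr i =>
      cases j with
      | inl j =>
        rw [lapoff _ _ (by simp)]
        simp only [Matrix.fromBlocks_apply₂₁, Matrix.smul_apply, Matrix.sub_apply,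
          smul_eq_mul]
        by_cases hij : i = j
        · subst hij
          rw [hN0 i, hL2d i, hL1d i]; ring
        · rw [hL1o i j hij, hL2o i j hij]
          exact hoffN i j
      | inr j =>
        by_cases hij : i = j
        · subst hij
          rw [lapdiag, hsum2 i, hdiagsum i]
          simp only [Matrix.fromBlocks_apply₂₂, Matrix.smul_apply, Matrix.add_apply,
            smul_eq_mul]
          rw [hL1d i, hL2d i]; ring
        · rw [lapoff _ _ (by simp [hij])]
          simp only [Matrix.fromBlocks_apply₂₂, Matrix.smul_apply, Matrix.add_apply,
            smul_eq_mul]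
          rw [hL1o i j hij, hL2o i j hij]
          exact hoffP i j hij
  -- conjugating matrix
  set S : Matrix (Fin n ⊕ Fin n) (Fin n ⊕ Fin n) ℝ :=
    Matrix.fromBlocks 1 1 1 (-1) with hSdef
  have hSS : S * S = (2 : ℝ) • (1 : Matrix (Fin n ⊕ Fin n) (Fin n ⊕ Fin n) ℝ) := by
    rw [hSdef, Matrix.fromBlocks_multiply, ← Matrix.fromBlocks_one, Matrix.fromBlocks_smul]
    congr 1 <;> simp <;> module
  have hval : ((2⁻¹ : ℝ) • S) * S = 1 := by
    rw [Matrix.smul_mul, hSS, smul_smul]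
    norm_num
  have hinv : S * ((2⁻¹ : ℝ) • S) = 1 := by
    rw [Matrix.mul_smul, hSS, smul_smul]
    norm_num
  set U : (Matrix (Fin n ⊕ Fin n) (Fin n ⊕ Fin n) ℝ)ˣ := ⟨(2⁻¹ : ℝ) • S, S, hval, hinv⟩ with hU
  have hUinv : (↑U⁻¹ : Matrix (Fin n ⊕ Fin n) (Fin n ⊕ Fin n) ℝ) = S := rfl
  have hUval : (↑U : Matrix (Fin n ⊕ Fin n) (Fin n ⊕ Fin n) ℝ) = (2⁻¹ : ℝ) • S := rfl
  have hconj : -t • lap (Matrix.fromBlocks P N N P)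
      = (U : Matrix (Fin n ⊕ Fin n) (Fin n ⊕ Fin n) ℝ) *
          (Matrix.fromBlocks (-t • L2) 0 0 (-t • L1)) *
          ((U⁻¹ : (Matrix (Fin n ⊕ Fin n) (Fin n ⊕ Fin n) ℝ)ˣ) :
            Matrix (Fin n ⊕ Fin n) (Fin n ⊕ Fin n) ℝ) := by
    rw [key, hUval, hUinv, Matrix.smul_mul, Matrix.smul_mul, hSdef,
      Matrix.fromBlocks_multiply, Matrix.fromBlocks_multiply]
    rw [Matrix.fromBlocks_smul, Matrix.fromBlocks_smul]
    simp only [one_mul, mul_one, mul_zero, zero_mul, add_zero, zero_add, neg_mul, mul_neg,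
      neg_zero, neg_neg, Matrix.fromBlocks_inj]
    refine ⟨by module, by module, by module, by module⟩
  rw [hconj, Matrix.exp_units_conj U, exp_fromBlocks_diag, hUval, hUinv,
    Matrix.smul_mul, Matrix.smul_mul, hSdef, Matrix.fromBlocks_multiply,
    Matrix.fromBlocks_multiply, Matrix.fromBlocks_smul]
  simp only [one_mul, mul_one, mul_zero, zero_mul, add_zero, zero_add, neg_mul, mul_neg,
    neg_zero, neg_neg, Matrix.fromBlocks_inj]
  refine ⟨by module, by module, by module, by module⟩
end

section
/- With 𝐀 = [[A⁺, |A⁻|],[|A⁻|, A⁺]] and P = [[(I+D)/2, (I-D)/2],[(I-D)/2, (I+D)/2]] for D ∈ 𝓓_n with DAD = |A|, the matrix P is an involution (P = P⁻¹, P² = I), and P·𝓛_𝐀·P = [[𝓛_{|A|}, 0],[0, 𝓛_{|A|}]]; consequently P·exp(-t𝓛_𝐀)·P = diag(exp(-t𝓛_{|A|}), exp(-t𝓛_{|A|})) for all t. -/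
open Matrix Finset

open Filter Topology

/-- The diagonal block-embedding algebra homomorphism. -/
noncomputable def diagEmbed (n : ℕ) :
    Matrix (Fin n) (Fin n) ℝ →ₐ[ℝ] Matrix (Fin n ⊕ Fin n) (Fin n ⊕ Fin n) ℝ where
  toFun X := Matrix.fromBlocks X 0 0 X
  map_one' := Matrix.fromBlocks_one
  map_mul' X Y := by simp [Matrix.fromBlocks_multiply]
  map_zero' := Matrix.fromBlocks_zero
  map_add' X Y := by simp [Matrix.fromBlocks_add]
  commutes' r := by
    simp only [Algebra.algebraMap_eq_smul_one]
    rw [show (1 : Matrix (Fin n ⊕ Fin n) (Fin n ⊕ Fin n) ℝ) = Matrix.fromBlocks 1 0 0 1 from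
      Matrix.fromBlocks_one.symm, Matrix.fromBlocks_smul, smul_zero]

lemma exp_diagEmbed {n : ℕ} (X : Matrix (Fin n) (Fin n) ℝ) :
    mexp (Matrix.fromBlocks X 0 0 X) = Matrix.fromBlocks (mexp X) 0 0 (mexp X) := by
  letI : NormedRing (Matrix (Fin n) (Fin n) ℝ) := Matrix.linftyOpNormedRing
  letI : NormedAlgebra ℝ (Matrix (Fin n) (Fin n) ℝ) := Matrix.linftyOpNormedAlgebra
  letI : NormedAlgebra ℚ (Matrix (Fin n) (Fin n) ℝ) := .restrictScalars ℚ ℝ _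
  letI : NormedRing (Matrix (Fin n ⊕ Fin n) (Fin n ⊕ Fin n) ℝ) := Matrix.linftyOpNormedRing
  letI : NormedAlgebra ℝ (Matrix (Fin n ⊕ Fin n) (Fin n ⊕ Fin n) ℝ) :=
    Matrix.linftyOpNormedAlgebra
  have hc : Continuous (diagEmbed n) :=
    LinearMap.continuous_of_finiteDimensional (diagEmbed n).toLinearMap
  exact (NormedSpace.map_exp (diagEmbed n) hc X).symm

lemma sandwich1 {n : ℕ} (D M : Matrix (Fin n) (Fin n) ℝ) :
    ((2⁻¹:ℝ) • (1 + D)) * M * ((2⁻¹:ℝ) • (1 + D)) +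
      ((2⁻¹:ℝ) • (1 - D)) * M * ((2⁻¹:ℝ) • (1 - D)) = (2⁻¹:ℝ) • (M + D * M * D) := by
  simp only [smul_mul_assoc, mul_smul_comm, add_mul, mul_add, sub_mul, mul_sub, one_mul, mul_one,
    smul_smul, smul_sub, smul_add]
  module

lemma sandwich2 {n : ℕ} (D M : Matrix (Fin n) (Fin n) ℝ) :
    ((2⁻¹:ℝ) • (1 + D)) * M * ((2⁻¹:ℝ) • (1 - D)) +
      ((2⁻¹:ℝ) • (1 - D)) * M * ((2⁻¹:ℝ) • (1 + D)) = (2⁻¹:ℝ) • (M - D * M * D) := by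
  simp only [smul_mul_assoc, mul_smul_comm, add_mul, mul_add, sub_mul, mul_sub, one_mul, mul_one,
    smul_smul, smul_sub, smul_add]
  module

theorem stmt15 {n : ℕ} (A : Matrix (Fin n) (Fin n) ℝ) (hdiag : ∀ i, A i i = 0)
    (d : Fin n → ℝ) (hd : ∀ i, d i = 1 ∨ d i = -1)
    (hbal : Matrix.diagonal d * A * Matrix.diagonal d = absM A)
    (P : Matrix (Fin n ⊕ Fin n) (Fin n ⊕ Fin n) ℝ)
    (hP : P = Matrix.fromBlocks
      ((2⁻¹ : ℝ) • (1 + Matrix.diagonal d)) ((2⁻¹ : ℝ) • (1 - Matrix.diagonal d))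
      ((2⁻¹ : ℝ) • (1 - Matrix.diagonal d)) ((2⁻¹ : ℝ) • (1 + Matrix.diagonal d))) :
    P * P = 1 ∧
    P * lap (Matrix.fromBlocks (matPos A) (absM (matNeg A))
        (absM (matNeg A)) (matPos A)) * P =
      Matrix.fromBlocks (lap (absM A)) 0 0 (lap (absM A)) ∧
    ∀ t : ℝ,
      P * mexp (-t • lap (Matrix.fromBlocks (matPos A) (absM (matNeg A))
          (absM (matNeg A)) (matPos A))) * P =
        Matrix.fromBlocks (mexp (-t • lap (absM A))) 0 0 (mexp (-t • lap (absM A))) := by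
  classical
  have hd2 : ∀ i, d i * d i = 1 := by
    intro i; rcases hd i with h | h <;> rw [h] <;> norm_num
  have hDD : Matrix.diagonal d * Matrix.diagonal d = 1 := by
    rw [Matrix.diagonal_mul_diagonal]
    rw [show (fun i => d i * d i) = fun _ : Fin n => (1:ℝ) from funext hd2]
    exact Matrix.diagonal_one
  have hbal' : ∀ i j, d i * A i j * d j = |A i j| := by
    intro i j
    have h := congrFun (congrFun hbal i) j
    simpa [Matrix.mul_diagonal, Matrix.diagonal_mul, absM] using h
  have hApB : ∀ i j, matPos A i j + absM (matNeg A) i j = |A i j| := by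
    intro i j
    by_cases h : 0 < A i j
    · simp [matPos, matNeg, absM, h, asymm h, abs_of_pos h]
    · by_cases h2 : A i j < 0
      · simp [matPos, matNeg, absM, h, h2]
      · have h3 : A i j = 0 := le_antisymm (not_lt.mp h) (not_lt.mp h2)
        simp [matPos, matNeg, absM, h3]
  have hApd : ∀ i j, d i * matPos A i j * d j = matPos A i j := by
    intro i j
    by_cases h : 0 < A i j
    · have h' := hbal' i j
      rw [abs_of_pos h] at h'
      simpa [matPos, h] using h'
    · simp [matPos, h]
  have hBd : ∀ i j, d i * absM (matNeg A) i j * d j = -(absM (matNeg A) i j) := by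
    intro i j
    by_cases h : A i j < 0
    · have h' := hbal' i j
      rw [abs_of_neg h] at h'
      simp only [absM, matNeg, if_pos h, abs_of_neg h]
      rw [show d i * -A i j * d j = -(d i * A i j * d j) from by ring, h', neg_neg]
    · simp [absM, matNeg, h]
  have hDAp : Matrix.diagonal d * matPos A * Matrix.diagonal d = matPos A := by
    ext i j
    rw [Matrix.mul_diagonal, Matrix.diagonal_mul]
    exact hApd i j
  have hDB : Matrix.diagonal d * absM (matNeg A) * Matrix.diagonal d = -(absM (matNeg A)) := by
    ext i j
    rw [Matrix.mul_diagonal, Matrix.diagonal_mul, Matrix.neg_apply]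
    exact hBd i j
  have hAp0 : ∀ i, matPos A i i = 0 := by intro i; simp [matPos, hdiag i]
  have hB0 : ∀ i, absM (matNeg A) i i = 0 := by intro i; simp [absM, matNeg, hdiag i]
  -- the two blocks
  set M₁ : Matrix (Fin n) (Fin n) ℝ :=
    (fun i j => if i = j then ∑ k ∈ Finset.univ.erase i, |A i k| else -(matPos A i j))
    with hM₁
  set M₂ : Matrix (Fin n) (Fin n) ℝ := -(absM (matNeg A)) with hM₂
  have hDM1 : Matrix.diagonal d * M₁ * Matrix.diagonal d = M₁ := by
    ext i j
    rw [Matrix.mul_diagonal, Matrix.diagonal_mul]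
    by_cases hij : i = j
    · subst hij
      simp only [hM₁, if_pos rfl]
      rcases hd i with h | h <;> rw [h] <;> ring
    · simp only [hM₁, if_neg hij]
      rw [show d i * -(matPos A i j) * d j = -(d i * matPos A i j * d j) from by ring, hApd i j]
  have hDM2 : Matrix.diagonal d * M₂ * Matrix.diagonal d = -M₂ := by
    rw [hM₂, Matrix.mul_neg, Matrix.neg_mul, hDB]
  have hsumrow : ∀ i, (∑ k, matPos A i k) + (∑ k, absM (matNeg A) i k) = ∑ k, |A i k| := by
    intro i
    rw [← Finset.sum_add_distrib]
    exact Finset.sum_congr rfl fun k _ => hApB i k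
  have hL : lap (Matrix.fromBlocks (matPos A) (absM (matNeg A)) (absM (matNeg A)) (matPos A)) =
      Matrix.fromBlocks M₁ M₂ M₂ M₁ := by
    ext i j
    cases i with
    | inl i =>
      cases j with
      | inl j =>
        by_cases hij : i = j
        · subst hij
          rw [Matrix.fromBlocks_apply₁₁]
          simp only [lap, if_pos rfl, Matrix.fromBlocks_apply₁₁, hM₁]
          rw [Finset.sum_erase_eq_sub (Finset.mem_univ _),
            Finset.sum_erase_eq_sub (Finset.mem_univ _), Fintype.sum_sum_type]
          simp only [Matrix.fromBlocks_apply₁₁, Matrix.fromBlocks_apply₁₂]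
          rw [hsumrow i, hAp0 i, hdiag i, abs_zero, if_pos trivial]
        · rw [Matrix.fromBlocks_apply₁₁]
          simp [lap, hij, hM₁]
      | inr j =>
        simp [lap, hM₂]
    | inr i =>
      cases j with
      | inl j =>
        simp [lap, hM₂]
      | inr j =>
        by_cases hij : i = j
        · subst hij
          rw [Matrix.fromBlocks_apply₂₂]
          simp only [lap, if_pos rfl, Matrix.fromBlocks_apply₂₂, hM₁]
          rw [Finset.sum_erase_eq_sub (Finset.mem_univ _),
            Finset.sum_erase_eq_sub (Finset.mem_univ _), Fintype.sum_sum_type]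
          simp only [Matrix.fromBlocks_apply₂₁, Matrix.fromBlocks_apply₂₂]
          rw [show (∑ k, absM (matNeg A) i k) + (∑ k, matPos A i k) = ∑ k, |A i k| from by
            rw [add_comm]; exact hsumrow i, hAp0 i, hdiag i, abs_zero, if_pos trivial]
        · rw [Matrix.fromBlocks_apply₂₂]
          simp [lap, hij, hM₁]
  have hK : M₁ + M₂ = lap (absM A) := by
    ext i j
    by_cases hij : i = j
    · subst hij
      rw [Matrix.add_apply]
      simp only [Matrix.add_apply, hM₁, hM₂, if_pos rfl, Matrix.neg_apply, hB0 i, neg_zero,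
        add_zero, lap, absM]
      simp [matNeg, hdiag i]
    · rw [Matrix.add_apply]
      simp only [Matrix.add_apply, hM₁, hM₂, if_neg hij, Matrix.neg_apply, lap, absM,
        ← hApB i j]
      ring
  -- involution
  set p : Matrix (Fin n) (Fin n) ℝ := (2⁻¹:ℝ) • (1 + Matrix.diagonal d) with hp
  set q : Matrix (Fin n) (Fin n) ℝ := (2⁻¹:ℝ) • (1 - Matrix.diagonal d) with hq
  have h1 : p * p + q * q = 1 := by
    have h := sandwich1 (Matrix.diagonal d) 1
    simp only [mul_one, ← hp, ← hq] at h
    rw [h, hDD, ← two_smul ℝ (1 : Matrix (Fin n) (Fin n) ℝ), smul_smul]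
    norm_num
  have h2 : p * q + q * p = 0 := by
    have h := sandwich2 (Matrix.diagonal d) 1
    simp only [mul_one, ← hp, ← hq] at h
    rw [h, hDD, sub_self, smul_zero]
  have h1' : q * q + p * p = 1 := by rw [add_comm]; exact h1
  have h2' : q * p + p * q = 0 := by rw [add_comm]; exact h2
  have hPP : P * P = 1 := by
    rw [hP, Matrix.fromBlocks_multiply, h1, h2, h2', h1', Matrix.fromBlocks_one]
  -- block conjugation identities
  have e1 : p * M₁ * p + q * M₁ * q = M₁ := by
    rw [hp, hq, sandwich1, hDM1, ← two_smul ℝ M₁, smul_smul]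
    norm_num
  have e2 : p * M₂ * q + q * M₂ * p = M₂ := by
    rw [hp, hq, sandwich2, hDM2, sub_neg_eq_add, ← two_smul ℝ M₂, smul_smul]
    norm_num
  have e3 : p * M₁ * q + q * M₁ * p = 0 := by
    rw [hp, hq, sandwich2, hDM1, sub_self, smul_zero]
  have e4 : p * M₂ * p + q * M₂ * q = 0 := by
    rw [hp, hq, sandwich1, hDM2]
    simp
  have hPLP : P * lap (Matrix.fromBlocks (matPos A) (absM (matNeg A))
      (absM (matNeg A)) (matPos A)) * P =
      Matrix.fromBlocks (lap (absM A)) 0 0 (lap (absM A)) := by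
    rw [hL, hP, Matrix.fromBlocks_multiply, Matrix.fromBlocks_multiply]
    have tTL : (p * M₁ + q * M₂) * p + (p * M₂ + q * M₁) * q = lap (absM A) := by
      rw [add_mul, add_mul,
        show p * M₁ * p + q * M₂ * p + (p * M₂ * q + q * M₁ * q)
          = (p * M₁ * p + q * M₁ * q) + (p * M₂ * q + q * M₂ * p) from by abel, e1, e2, hK]
    have tTR : (p * M₁ + q * M₂) * q + (p * M₂ + q * M₁) * p = 0 := by
      rw [add_mul, add_mul,
        show p * M₁ * q + q * M₂ * q + (p * M₂ * p + q * M₁ * p)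
          = (p * M₁ * q + q * M₁ * p) + (p * M₂ * p + q * M₂ * q) from by abel, e3, e4, add_zero]
    have tBL : (q * M₁ + p * M₂) * p + (q * M₂ + p * M₁) * q = 0 := by
      rw [add_mul, add_mul,
        show q * M₁ * p + p * M₂ * p + (q * M₂ * q + p * M₁ * q)
          = (p * M₁ * q + q * M₁ * p) + (p * M₂ * p + q * M₂ * q) from by abel, e3, e4, add_zero]
    have tBR : (q * M₁ + p * M₂) * q + (q * M₂ + p * M₁) * p = lap (absM A) := by
      rw [add_mul, add_mul,
        show q * M₁ * q + p * M₂ * q + (q * M₂ * p + p * M₁ * p)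
          = (p * M₁ * p + q * M₁ * q) + (p * M₂ * q + q * M₂ * p) from by abel, e1, e2, hK]
    rw [tTL, tTR, tBL, tBR]
  refine ⟨hPP, hPLP, ?_⟩
  intro t
  have hUnit : IsUnit P := ⟨⟨P, P, hPP, hPP⟩, rfl⟩
  have hPinv : P⁻¹ = P := Matrix.inv_eq_right_inv hPP
  have hconj := Matrix.exp_conj P
    (-t • lap (Matrix.fromBlocks (matPos A) (absM (matNeg A)) (absM (matNeg A)) (matPos A))) hUnit
  rw [hPinv] at hconj
  rw [← hconj, mul_smul_comm, smul_mul_assoc, hPLP, Matrix.fromBlocks_smul, smul_zero,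
    exp_diagEmbed]
end

section
/- Suppose the lifted exponential exp(-t𝓛_𝐀) converges as t → ∞ to the rank-one matrix 1_{2n} 𝐟ᵀ for some nonnegative 𝐟 ∈ ℝ^{2n} with 𝐟ᵀ1_{2n} = 1, and exp(-t𝓛_{|A|}) converges to 1_n νᵀ with νᵀ1_n = 1. Then 𝐟 = (1/2)[νᵀ, νᵀ]ᵀ, Φ_odd(t) and Φ_even(t) both converge to (1/2)·1_n νᵀ, and consequently exp(-tL) = Φ_even(t) - Φ_odd(t) converges to the zero matrix as t → ∞. -/
open Matrix Finset

open Filter Topology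

/-- The four block identities behind the lifting homomorphism. -/
private lemma blk_one {n : ℕ} :
    ((2⁻¹ : ℝ) • ((1 : Matrix (Fin n) (Fin n) ℝ) + 1) = 1) ∧
    ((2⁻¹ : ℝ) • ((1 : Matrix (Fin n) (Fin n) ℝ) - 1) = 0) := by
  constructor <;> module

/-- The lifting algebra homomorphism `(E, F) ↦ fromBlocks ((E+F)/2) ((E-F)/2) ((E-F)/2) ((E+F)/2)`. -/
noncomputable def psiHom (n : ℕ) :
    (Matrix (Fin n) (Fin n) ℝ × Matrix (Fin n) (Fin n) ℝ) →ₐ[ℝ]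
      Matrix (Fin n ⊕ Fin n) (Fin n ⊕ Fin n) ℝ where
  toFun p := Matrix.fromBlocks ((2⁻¹ : ℝ) • (p.1 + p.2)) ((2⁻¹ : ℝ) • (p.1 - p.2))
      ((2⁻¹ : ℝ) • (p.1 - p.2)) ((2⁻¹ : ℝ) • (p.1 + p.2))
  map_one' := by
    show Matrix.fromBlocks ((2⁻¹ : ℝ) • ((1 : Matrix (Fin n) (Fin n) ℝ) + 1))
      ((2⁻¹ : ℝ) • ((1 : Matrix (Fin n) (Fin n) ℝ) - 1))
      ((2⁻¹ : ℝ) • ((1 : Matrix (Fin n) (Fin n) ℝ) - 1))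
      ((2⁻¹ : ℝ) • ((1 : Matrix (Fin n) (Fin n) ℝ) + 1)) = 1
    rw [blk_one.1, blk_one.2, Matrix.fromBlocks_one]
  map_mul' p q := by
    show Matrix.fromBlocks _ _ _ _ = Matrix.fromBlocks _ _ _ _ * Matrix.fromBlocks _ _ _ _
    rw [Matrix.fromBlocks_multiply]
    have hW : ((2⁻¹ : ℝ) • (p.1 + p.2)) * ((2⁻¹ : ℝ) • (q.1 + q.2)) +
        ((2⁻¹ : ℝ) • (p.1 - p.2)) * ((2⁻¹ : ℝ) • (q.1 - q.2)) =
        (2⁻¹ : ℝ) • (p.1 * q.1 + p.2 * q.2) := by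
      simp only [smul_mul_assoc, mul_smul_comm, mul_add, add_mul, mul_sub, sub_mul]
      module
    have hX : ((2⁻¹ : ℝ) • (p.1 + p.2)) * ((2⁻¹ : ℝ) • (q.1 - q.2)) +
        ((2⁻¹ : ℝ) • (p.1 - p.2)) * ((2⁻¹ : ℝ) • (q.1 + q.2)) =
        (2⁻¹ : ℝ) • (p.1 * q.1 - p.2 * q.2) := by
      simp only [smul_mul_assoc, mul_smul_comm, mul_add, add_mul, mul_sub, sub_mul]
      module
    have hY : ((2⁻¹ : ℝ) • (p.1 - p.2)) * ((2⁻¹ : ℝ) • (q.1 + q.2)) +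
        ((2⁻¹ : ℝ) • (p.1 + p.2)) * ((2⁻¹ : ℝ) • (q.1 - q.2)) =
        (2⁻¹ : ℝ) • (p.1 * q.1 - p.2 * q.2) := by
      simp only [smul_mul_assoc, mul_smul_comm, mul_add, add_mul, mul_sub, sub_mul]
      module
    have hZ : ((2⁻¹ : ℝ) • (p.1 - p.2)) * ((2⁻¹ : ℝ) • (q.1 - q.2)) +
        ((2⁻¹ : ℝ) • (p.1 + p.2)) * ((2⁻¹ : ℝ) • (q.1 + q.2)) =
        (2⁻¹ : ℝ) • (p.1 * q.1 + p.2 * q.2) := by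
      simp only [smul_mul_assoc, mul_smul_comm, mul_add, add_mul, mul_sub, sub_mul]
      module
    rw [hW, hX, hY, hZ]
    rfl
  map_zero' := by
    show Matrix.fromBlocks _ _ _ _ = (0 : Matrix (Fin n ⊕ Fin n) (Fin n ⊕ Fin n) ℝ)
    ext (i | i) (j | j) <;> simp [Matrix.fromBlocks]
  map_add' p q := by
    show Matrix.fromBlocks _ _ _ _ = Matrix.fromBlocks _ _ _ _ + Matrix.fromBlocks _ _ _ _
    rw [Matrix.fromBlocks_add]
    have h1 : (2⁻¹ : ℝ) • ((p + q).1 + (p + q).2) =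
        (2⁻¹ : ℝ) • (p.1 + p.2) + (2⁻¹ : ℝ) • (q.1 + q.2) := by
      simp only [Prod.fst_add, Prod.snd_add]; module
    have h2 : (2⁻¹ : ℝ) • ((p + q).1 - (p + q).2) =
        (2⁻¹ : ℝ) • (p.1 - p.2) + (2⁻¹ : ℝ) • (q.1 - q.2) := by
      simp only [Prod.fst_add, Prod.snd_add]; module
    rw [h1, h2]
  commutes' r := by
    show Matrix.fromBlocks _ _ _ _ = _
    have h1 : (algebraMap ℝ ((Matrix (Fin n) (Fin n) ℝ) × (Matrix (Fin n) (Fin n) ℝ)) r).1 =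
        algebraMap ℝ (Matrix (Fin n) (Fin n) ℝ) r := rfl
    have h2 : (algebraMap ℝ ((Matrix (Fin n) (Fin n) ℝ) × (Matrix (Fin n) (Fin n) ℝ)) r).2 =
        algebraMap ℝ (Matrix (Fin n) (Fin n) ℝ) r := rfl
    rw [h1, h2]
    have e1 : (2⁻¹ : ℝ) • (algebraMap ℝ (Matrix (Fin n) (Fin n) ℝ) r +
        algebraMap ℝ (Matrix (Fin n) (Fin n) ℝ) r) = algebraMap ℝ (Matrix (Fin n) (Fin n) ℝ) r :=
      by module
    have e2 : (2⁻¹ : ℝ) • (algebraMap ℝ (Matrix (Fin n) (Fin n) ℝ) r -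
        algebraMap ℝ (Matrix (Fin n) (Fin n) ℝ) r) = 0 := by module
    rw [e1, e2]
    ext (i | i) (j | j) <;>
      simp [Matrix.fromBlocks, Matrix.algebraMap_matrix_apply, Sum.inl.injEq, Sum.inr.injEq]

lemma psiHom_apply {n : ℕ} (x y : Matrix (Fin n) (Fin n) ℝ) :
    psiHom n (x, y) = Matrix.fromBlocks ((2⁻¹ : ℝ) • (x + y)) ((2⁻¹ : ℝ) • (x - y))
      ((2⁻¹ : ℝ) • (x - y)) ((2⁻¹ : ℝ) • (x + y)) := rfl

lemma psiHom_continuous (n : ℕ) : Continuous (psiHom n) := by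
  have : ⇑(psiHom n) = fun p : Matrix (Fin n) (Fin n) ℝ × Matrix (Fin n) (Fin n) ℝ =>
      Matrix.fromBlocks ((2⁻¹ : ℝ) • (p.1 + p.2)) ((2⁻¹ : ℝ) • (p.1 - p.2))
        ((2⁻¹ : ℝ) • (p.1 - p.2)) ((2⁻¹ : ℝ) • (p.1 + p.2)) := by
    funext p
    exact psiHom_apply p.1 p.2
  rw [this]
  apply Continuous.matrix_fromBlocks <;> fun_prop

lemma exp_psiHom {n : ℕ} (x y : Matrix (Fin n) (Fin n) ℝ) :
    mexp (psiHom n (x, y)) = psiHom n (mexp x, mexp y) := by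
  letI : SeminormedRing (Matrix (Fin n) (Fin n) ℝ) := Matrix.linftyOpSemiNormedRing
  letI : NormedRing (Matrix (Fin n) (Fin n) ℝ) := Matrix.linftyOpNormedRing
  letI : NormedAlgebra ℝ (Matrix (Fin n) (Fin n) ℝ) := Matrix.linftyOpNormedAlgebra
  letI : SeminormedRing (Matrix (Fin n ⊕ Fin n) (Fin n ⊕ Fin n) ℝ) :=
    Matrix.linftyOpSemiNormedRing
  letI : NormedRing (Matrix (Fin n ⊕ Fin n) (Fin n ⊕ Fin n) ℝ) := Matrix.linftyOpNormedRing
  letI : NormedAlgebra ℝ (Matrix (Fin n ⊕ Fin n) (Fin n ⊕ Fin n) ℝ) :=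
    Matrix.linftyOpNormedAlgebra
  let +nondep : NormedAlgebra ℚ (Matrix (Fin n) (Fin n) ℝ) := .restrictScalars ℚ ℝ _
  let +nondep : NormedAlgebra ℚ (Matrix (Fin n ⊕ Fin n) (Fin n ⊕ Fin n) ℝ) :=
    .restrictScalars ℚ ℝ _
  have h := NormedSpace.map_exp (psiHom n) (psiHom_continuous n) (x, y)
  refine h.symm.trans ?_
  congr 1
  ext1 <;> simp <;> rfl

private lemma sum_erase_inl {n : ℕ} (g : Fin n ⊕ Fin n → ℝ) (i : Fin n) :
    ∑ k ∈ Finset.univ.erase (Sum.inl i : Fin n ⊕ Fin n), g k =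
      (∑ a, g (Sum.inl a) - g (Sum.inl i)) + ∑ a, g (Sum.inr a) := by
  rw [Finset.sum_erase_eq_sub (Finset.mem_univ _), Fintype.sum_sum_type]
  ring

private lemma sum_erase_inr {n : ℕ} (g : Fin n ⊕ Fin n → ℝ) (i : Fin n) :
    ∑ k ∈ Finset.univ.erase (Sum.inr i : Fin n ⊕ Fin n), g k =
      (∑ a, g (Sum.inl a)) + (∑ a, g (Sum.inr a) - g (Sum.inr i)) := by
  rw [Finset.sum_erase_eq_sub (Finset.mem_univ _), Fintype.sum_sum_type]
  ring

/-- The key structural identity: the Laplacian of the lifted matrix is the image under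
`psiHom` of the Laplacian of `|A|` and the signed Laplacian of `A`. -/
lemma lap_lift {n : ℕ} (A : Matrix (Fin n) (Fin n) ℝ) (hdiag : ∀ i, A i i = 0) :
    lap (Matrix.fromBlocks (matPos A) (absM (matNeg A)) (absM (matNeg A)) (matPos A)) =
      psiHom n (lap (absM A), signedLap A) := by
  set S : Fin n → ℝ := fun i => ∑ k ∈ Finset.univ.erase i, |A i k| with hS
  have hBC : ∀ i j, matPos A i j + absM (matNeg A) i j = |A i j| := by
    intro i j
    rcases lt_trichotomy (A i j) 0 with h | h | h
    · simp [matPos, matNeg, absM, h, not_lt.mpr h.le, abs_of_neg h]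
    · simp [matPos, matNeg, absM, h]
    · simp [matPos, matNeg, absM, h, not_lt.mpr h.le, abs_of_pos h]
  have hBmC : ∀ i j, matPos A i j - absM (matNeg A) i j = A i j := by
    intro i j
    rcases lt_trichotomy (A i j) 0 with h | h | h
    · simp [matPos, matNeg, absM, h, not_lt.mpr h.le, abs_of_neg h]
    · simp [matPos, matNeg, absM, h]
    · simp [matPos, matNeg, absM, h, not_lt.mpr h.le]
  have hB0 : ∀ i, matPos A i i = 0 := fun i => by simp [matPos, hdiag i]
  have habs0 : ∀ i, |A i i| = 0 := fun i => by simp [hdiag i]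
  have lapd : ∀ i, lap (absM A) i i = S i := by
    intro i
    simp [lap, hS, absM]
  have lapo : ∀ i j, i ≠ j → lap (absM A) i j = -|A i j| := by
    intro i j hij
    simp [lap, hij, absM]
  have sigd : ∀ i, signedLap A i i = S i := by
    intro i
    simp [signedLap, hS]
  have sigo : ∀ i j, i ≠ j → signedLap A i j = -A i j := by
    intro i j hij
    simp [signedLap, hij]
  have hdsum : ∀ i : Fin n, (∑ a, matPos A i a) + ∑ a, absM (matNeg A) i a = S i := by
    intro i
    show _ = ∑ k ∈ Finset.univ.erase i, |A i k|
    rw [Finset.sum_erase_eq_sub (Finset.mem_univ i), ← Finset.sum_add_distrib]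
    rw [habs0 i, sub_zero]
    exact Finset.sum_congr rfl fun a _ => hBC i a
  ext (i | i) (j | j)
  · by_cases hij : i = j
    · subst hij
      show (if (Sum.inl i : Fin n ⊕ Fin n) = Sum.inl i then _ else _) = _
      rw [if_pos rfl, psiHom_apply, Matrix.fromBlocks_apply₁₁, sum_erase_inl]
      simp only [Matrix.fromBlocks_apply₁₁, Matrix.fromBlocks_apply₁₂, Matrix.smul_apply,
        Matrix.add_apply, smul_eq_mul, lapd, sigd]
      rw [hB0 i, sub_zero, hdsum i]
      try ring
    · have hne : (Sum.inl i : Fin n ⊕ Fin n) ≠ Sum.inl j := fun h => hij (Sum.inl.inj h)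
      show (if (Sum.inl i : Fin n ⊕ Fin n) = Sum.inl j then _ else _) = _
      rw [if_neg hne, psiHom_apply, Matrix.fromBlocks_apply₁₁]
      simp only [Matrix.fromBlocks_apply₁₁, Matrix.smul_apply, Matrix.add_apply, smul_eq_mul,
        lapo i j hij, sigo i j hij]
      linarith [hBC i j, hBmC i j]
  · show (if (Sum.inl i : Fin n ⊕ Fin n) = Sum.inr j then _ else _) = _
    rw [if_neg Sum.inl_ne_inr, psiHom_apply, Matrix.fromBlocks_apply₁₂]
    simp only [Matrix.fromBlocks_apply₁₂, Matrix.smul_apply, Matrix.sub_apply, smul_eq_mul]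
    by_cases hij : i = j
    · subst hij
      rw [lapd i, sigd i]
      have : absM (matNeg A) i i = 0 := by simp [absM, matNeg, hdiag i]
      rw [this]
      try ring
    · rw [lapo i j hij, sigo i j hij]
      linarith [hBC i j, hBmC i j]
  · show (if (Sum.inr i : Fin n ⊕ Fin n) = Sum.inl j then _ else _) = _
    rw [if_neg Sum.inr_ne_inl, psiHom_apply, Matrix.fromBlocks_apply₂₁]
    simp only [Matrix.fromBlocks_apply₂₁, Matrix.smul_apply, Matrix.sub_apply, smul_eq_mul]
    by_cases hij : i = j
    · subst hij
      rw [lapd i, sigd i]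
      have : absM (matNeg A) i i = 0 := by simp [absM, matNeg, hdiag i]
      rw [this]
      try ring
    · rw [lapo i j hij, sigo i j hij]
      linarith [hBC i j, hBmC i j]
  · by_cases hij : i = j
    · subst hij
      show (if (Sum.inr i : Fin n ⊕ Fin n) = Sum.inr i then _ else _) = _
      rw [if_pos rfl, psiHom_apply, Matrix.fromBlocks_apply₂₂, sum_erase_inr]
      simp only [Matrix.fromBlocks_apply₂₁, Matrix.fromBlocks_apply₂₂, Matrix.smul_apply,
        Matrix.add_apply, smul_eq_mul, lapd, sigd]
      rw [hB0 i, sub_zero]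
      linarith [hdsum i]
    · have hne : (Sum.inr i : Fin n ⊕ Fin n) ≠ Sum.inr j := fun h => hij (Sum.inr.inj h)
      show (if (Sum.inr i : Fin n ⊕ Fin n) = Sum.inr j then _ else _) = _
      rw [if_neg hne, psiHom_apply, Matrix.fromBlocks_apply₂₂]
      simp only [Matrix.fromBlocks_apply₂₂, Matrix.smul_apply, Matrix.add_apply, smul_eq_mul,
        lapo i j hij, sigo i j hij]
      linarith [hBC i j, hBmC i j]

theorem stmt17 {n : ℕ} (A : Matrix (Fin n) (Fin n) ℝ) (hdiag : ∀ i, A i i = 0)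
    (f : Fin n ⊕ Fin n → ℝ) (hf0 : ∀ i, 0 ≤ f i) (hf1 : ∑ i, f i = 1)
    (hconvA : Tendsto (fun t : ℝ => mexp (-t • lap (Matrix.fromBlocks (matPos A)
        (absM (matNeg A)) (absM (matNeg A)) (matPos A)))) atTop
      (nhds (Matrix.of fun _ j => f j)))
    (ν : Fin n → ℝ) (hν1 : ∑ i, ν i = 1)
    (hconvAbs : Tendsto (fun t : ℝ => mexp (-t • lap (absM A))) atTop
      (nhds (Matrix.of fun _ j => ν j))) :
    (∀ i, f (Sum.inl i) = ν i / 2 ∧ f (Sum.inr i) = ν i / 2) ∧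
    Tendsto (fun t : ℝ => (2⁻¹ : ℝ) • (mexp (-t • lap (absM A)) - mexp (-t • signedLap A)))
      atTop (nhds ((2⁻¹ : ℝ) • Matrix.of fun _ j => ν j)) ∧
    Tendsto (fun t : ℝ => (2⁻¹ : ℝ) • (mexp (-t • lap (absM A)) + mexp (-t • signedLap A)))
      atTop (nhds ((2⁻¹ : ℝ) • Matrix.of fun _ j => ν j)) ∧
    Tendsto (fun t : ℝ => mexp (-t • signedLap A)) atTop (nhds 0) := by
  classical
  -- the fin type is nonempty
  rcases isEmpty_or_nonempty (Fin n) with he | hne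
  · exfalso
    rw [Finset.univ_eq_empty, Finset.sum_empty] at hf1
    norm_num at hf1
  obtain ⟨i0⟩ := hne
  set E : ℝ → Matrix (Fin n) (Fin n) ℝ := fun t => mexp (-t • lap (absM A)) with hE
  set F : ℝ → Matrix (Fin n) (Fin n) ℝ := fun t => mexp (-t • signedLap A) with hF
  have key : ∀ t : ℝ, mexp (-t • lap (Matrix.fromBlocks (matPos A)
      (absM (matNeg A)) (absM (matNeg A)) (matPos A))) =
      Matrix.fromBlocks ((2⁻¹ : ℝ) • (E t + F t)) ((2⁻¹ : ℝ) • (E t - F t))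
        ((2⁻¹ : ℝ) • (E t - F t)) ((2⁻¹ : ℝ) • (E t + F t)) := by
    intro t
    have h1 : -t • lap (Matrix.fromBlocks (matPos A)
        (absM (matNeg A)) (absM (matNeg A)) (matPos A)) =
        psiHom n (-t • lap (absM A), -t • signedLap A) := by
      rw [lap_lift A hdiag]
      have h2 := map_smul ((psiHom n).toLinearMap) (-t) (lap (absM A), signedLap A)
      have h3 : (psiHom n).toLinearMap = (psiHom n : _ →ₗ[ℝ] _) := rfl
      calc -t • (psiHom n) (lap (absM A), signedLap A)
          = (psiHom n) (-t • (lap (absM A), signedLap A)) := h2.symm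
        _ = psiHom n (-t • lap (absM A), -t • signedLap A) := rfl
    rw [h1, exp_psiHom, psiHom_apply]
  have c11 : Continuous (fun M : Matrix (Fin n ⊕ Fin n) (Fin n ⊕ Fin n) ℝ =>
      (Matrix.of fun i j => M (Sum.inl i) (Sum.inl j) : Matrix (Fin n) (Fin n) ℝ)) := by
    have hrw : (fun M : Matrix (Fin n ⊕ Fin n) (Fin n ⊕ Fin n) ℝ =>
        (Matrix.of fun i j => M (Sum.inl i) (Sum.inl j) : Matrix (Fin n) (Fin n) ℝ)) =
        fun (M : Matrix (Fin n ⊕ Fin n) (Fin n ⊕ Fin n) ℝ) (i j : Fin n) => M (Sum.inl i) (Sum.inl j) := rfl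
    rw [hrw]
    exact continuous_pi fun i => continuous_pi fun j =>
      (continuous_apply _).comp (continuous_apply _)
  have c12 : Continuous (fun M : Matrix (Fin n ⊕ Fin n) (Fin n ⊕ Fin n) ℝ =>
      (Matrix.of fun i j => M (Sum.inl i) (Sum.inr j) : Matrix (Fin n) (Fin n) ℝ)) := by
    have hrw : (fun M : Matrix (Fin n ⊕ Fin n) (Fin n ⊕ Fin n) ℝ =>
        (Matrix.of fun i j => M (Sum.inl i) (Sum.inr j) : Matrix (Fin n) (Fin n) ℝ)) =
        fun (M : Matrix (Fin n ⊕ Fin n) (Fin n ⊕ Fin n) ℝ) (i j : Fin n) => M (Sum.inl i) (Sum.inr j) := rfl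
    rw [hrw]
    exact continuous_pi fun i => continuous_pi fun j =>
      (continuous_apply _).comp (continuous_apply _)
  have c21 : Continuous (fun M : Matrix (Fin n ⊕ Fin n) (Fin n ⊕ Fin n) ℝ =>
      (Matrix.of fun i j => M (Sum.inr i) (Sum.inl j) : Matrix (Fin n) (Fin n) ℝ)) := by
    have hrw : (fun M : Matrix (Fin n ⊕ Fin n) (Fin n ⊕ Fin n) ℝ =>
        (Matrix.of fun i j => M (Sum.inr i) (Sum.inl j) : Matrix (Fin n) (Fin n) ℝ)) =
        fun (M : Matrix (Fin n ⊕ Fin n) (Fin n ⊕ Fin n) ℝ) (i j : Fin n) => M (Sum.inr i) (Sum.inl j) := rfl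
    rw [hrw]
    exact continuous_pi fun i => continuous_pi fun j =>
      (continuous_apply _).comp (continuous_apply _)
  -- the three block limits
  have h11 : Tendsto (fun t : ℝ => (2⁻¹ : ℝ) • (E t + F t)) atTop
      (nhds (Matrix.of fun (_ : Fin n) j => f (Sum.inl j))) := by
    have h := (c11.tendsto (Matrix.of fun _ j => f j)).comp hconvA
    have hfun : ((fun M : Matrix (Fin n ⊕ Fin n) (Fin n ⊕ Fin n) ℝ =>
        (Matrix.of fun i j => M (Sum.inl i) (Sum.inl j) : Matrix (Fin n) (Fin n) ℝ)) ∘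
        (fun t : ℝ => mexp (-t • lap (Matrix.fromBlocks (matPos A)
          (absM (matNeg A)) (absM (matNeg A)) (matPos A))))) =
        fun t : ℝ => (2⁻¹ : ℝ) • (E t + F t) := by
      funext t
      show (Matrix.of fun i j => (mexp (-t • lap (Matrix.fromBlocks (matPos A)
          (absM (matNeg A)) (absM (matNeg A)) (matPos A)))) (Sum.inl i) (Sum.inl j) :
          Matrix (Fin n) (Fin n) ℝ) = _
      rw [key t]
      ext i j
      simp [Matrix.fromBlocks, Matrix.smul_apply, Matrix.add_apply, Matrix.sub_apply,
        Matrix.of_apply]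
      try ring
    rwa [hfun] at h
  have h12 : Tendsto (fun t : ℝ => (2⁻¹ : ℝ) • (E t - F t)) atTop
      (nhds (Matrix.of fun (_ : Fin n) j => f (Sum.inr j))) := by
    have h := (c12.tendsto (Matrix.of fun _ j => f j)).comp hconvA
    have hfun : ((fun M : Matrix (Fin n ⊕ Fin n) (Fin n ⊕ Fin n) ℝ =>
        (Matrix.of fun i j => M (Sum.inl i) (Sum.inr j) : Matrix (Fin n) (Fin n) ℝ)) ∘
        (fun t : ℝ => mexp (-t • lap (Matrix.fromBlocks (matPos A)
          (absM (matNeg A)) (absM (matNeg A)) (matPos A))))) =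
        fun t : ℝ => (2⁻¹ : ℝ) • (E t - F t) := by
      funext t
      show (Matrix.of fun i j => (mexp (-t • lap (Matrix.fromBlocks (matPos A)
          (absM (matNeg A)) (absM (matNeg A)) (matPos A)))) (Sum.inl i) (Sum.inr j) :
          Matrix (Fin n) (Fin n) ℝ) = _
      rw [key t]
      ext i j
      simp [Matrix.fromBlocks, Matrix.smul_apply, Matrix.add_apply, Matrix.sub_apply,
        Matrix.of_apply]
      try ring
    rwa [hfun] at h
  have h21 : Tendsto (fun t : ℝ => (2⁻¹ : ℝ) • (E t - F t)) atTop
      (nhds (Matrix.of fun (_ : Fin n) j => f (Sum.inl j))) := by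
    have h := (c21.tendsto (Matrix.of fun _ j => f j)).comp hconvA
    have hfun : ((fun M : Matrix (Fin n ⊕ Fin n) (Fin n ⊕ Fin n) ℝ =>
        (Matrix.of fun i j => M (Sum.inr i) (Sum.inl j) : Matrix (Fin n) (Fin n) ℝ)) ∘
        (fun t : ℝ => mexp (-t • lap (Matrix.fromBlocks (matPos A)
          (absM (matNeg A)) (absM (matNeg A)) (matPos A))))) =
        fun t : ℝ => (2⁻¹ : ℝ) • (E t - F t) := by
      funext t
      show (Matrix.of fun i j => (mexp (-t • lap (Matrix.fromBlocks (matPos A)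
          (absM (matNeg A)) (absM (matNeg A)) (matPos A)))) (Sum.inr i) (Sum.inl j) :
          Matrix (Fin n) (Fin n) ℝ) = _
      rw [key t]
      ext i j
      simp [Matrix.fromBlocks, Matrix.smul_apply, Matrix.add_apply, Matrix.sub_apply,
        Matrix.of_apply]
      try ring
    rwa [hfun] at h
  -- f (inl j) = f (inr j)
  have hsame : ∀ j, f (Sum.inl j) = f (Sum.inr j) := by
    intro j
    have := tendsto_nhds_unique h21 h12
    exact congrFun (congrFun this i0) j
  -- ν j = f (inl j) + f (inr j)
  have hsum : ∀ j, ν j = f (Sum.inl j) + f (Sum.inr j) := by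
    intro j
    have hEsum : (fun t : ℝ => E t) = fun t : ℝ =>
        ((2⁻¹ : ℝ) • (E t + F t)) + ((2⁻¹ : ℝ) • (E t - F t)) := by
      funext t
      module
    have h1 : Tendsto (fun t : ℝ => E t) atTop
        (nhds ((Matrix.of fun (_ : Fin n) j => f (Sum.inl j)) +
          (Matrix.of fun (_ : Fin n) j => f (Sum.inr j)))) := by
      rw [hEsum]
      exact h11.add h12
    have h2 := tendsto_nhds_unique hconvAbs h1
    have := congrFun (congrFun h2 i0) j
    simpa using this
  have hval : ∀ i, f (Sum.inl i) = ν i / 2 ∧ f (Sum.inr i) = ν i / 2 := by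
    intro i
    have h1 := hsame i
    have h2 := hsum i
    constructor <;> linarith
  refine ⟨hval, ?_, ?_, ?_⟩
  · have hlim : (Matrix.of fun (_ : Fin n) j => f (Sum.inr j)) =
        (2⁻¹ : ℝ) • (Matrix.of fun (_ : Fin n) j => ν j) := by
      ext i j
      simp [(hval j).2]
      try ring
    rw [← hlim]
    exact h12
  · have hlim : (Matrix.of fun (_ : Fin n) j => f (Sum.inl j)) =
        (2⁻¹ : ℝ) • (Matrix.of fun (_ : Fin n) j => ν j) := by
      ext i j
      simp [(hval j).1]
      try ring
    rw [← hlim]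
    exact h11
  · have hFsub : (fun t : ℝ => F t) = fun t : ℝ =>
        ((2⁻¹ : ℝ) • (E t + F t)) - ((2⁻¹ : ℝ) • (E t - F t)) := by
      funext t
      module
    have h := h11.sub h12
    rw [← hFsub] at h
    have hzero : (Matrix.of fun (_ : Fin n) j => f (Sum.inl j)) -
        (Matrix.of fun (_ : Fin n) j => f (Sum.inr j)) = 0 := by
      ext i j
      simp [hsame j]
    rwa [hzero] at h
end
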